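/- A 3×3 Hermitian matrix ρ = (1/3)𝟙 + (1/2)(x λ₁ + y λ₄ + z λ₆), where λ₁, λ₄, λ₆ are the symmetric off-diagonal Gell-Mann matrices, is positive semidefinite if and only if x² + y² + z² − 3xyz ≤ 4/9 and x² + y² + z² ≤ 4/3. -/

import Mathlib

open Matrix

def lam1 : Matrix (Fin 3) (Fin 3) ℝ := !![0, 1, 0; 1, 0, 0; 0, 0, 0]
def lam4 : Matrix (Fin 3) (Fin 3) ℝ := !![0, 0, 1; 0, 0, 0; 1, 0, 0]
def lam6 : Matrix (Fin 3) (Fin 3) ℝ := !![0, 0, 0; 0, 0, 1; 0, 1, 0]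

theorem qutrit_rice_dumpling_psd_iff (x y z : ℝ) :
    ((1/3 : ℝ) • (1 : Matrix (Fin 3) (Fin 3) ℝ) +
      (1/2 : ℝ) • (x • lam1 + y • lam4 + z • lam6)).PosSemidef ↔
      x^2 + y^2 + z^2 - 3*x*y*z ≤ 4/9 ∧ x^2 + y^2 + z^2 ≤ 4/3 := by
  have hMeq : ((1/3 : ℝ) • (1 : Matrix (Fin 3) (Fin 3) ℝ) +
      (1/2 : ℝ) • (x • lam1 + y • lam4 + z • lam6)) =
      !![1/3, x/2, y/2; x/2, 1/3, z/2; y/2, z/2, 1/3] := by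
    ext i j
    fin_cases i <;> fin_cases j <;>
      simp [lam1, lam4, lam6, Matrix.one_apply] <;> ring
  rw [hMeq]
  set M : Matrix (Fin 3) (Fin 3) ℝ := !![1/3, x/2, y/2; x/2, 1/3, z/2; y/2, z/2, 1/3] with hM
  have hHerm : M.IsHermitian := by
    ext i j
    fin_cases i <;> fin_cases j <;> simp [hM]
  constructor
  · intro hP
    have hdet : (0:ℝ) ≤ M.det := by
      rw [hHerm.det_eq_prod_eigenvalues]
      exact Finset.prod_nonneg fun i _ => hP.eigenvalues_nonneg i
    rw [Matrix.det_fin_three] at hdet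
    simp [hM] at hdet
    constructor
    · nlinarith [hdet]
    · have h1 := hP.dotProduct_mulVec_nonneg ![1, 1, 0]
      have h2 := hP.dotProduct_mulVec_nonneg ![1, -1, 0]
      have h3 := hP.dotProduct_mulVec_nonneg ![1, 0, 1]
      have h4 := hP.dotProduct_mulVec_nonneg ![1, 0, -1]
      have h5 := hP.dotProduct_mulVec_nonneg ![0, 1, 1]
      have h6 := hP.dotProduct_mulVec_nonneg ![0, 1, -1]
      simp [hM, dotProduct, mulVec, Fin.sum_univ_three] at h1 h2 h3 h4 h5 h6
      nlinarith [h1, h2, h3, h4, h5, h6]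
  · rintro ⟨h1, h2⟩
    refine hHerm.posSemidef_iff_eigenvalues_nonneg.mpr fun i => show (0:ℝ) ≤ _ from ?_
    set μ := hHerm.eigenvalues i with hμ
    have hv := hHerm.mulVec_eigenvectorBasis i
    have hvne : (⇑(hHerm.eigenvectorBasis i) : Fin 3 → ℝ) ≠ 0 := by
      have := hHerm.eigenvectorBasis.orthonormal.ne_zero i
      intro h; apply this
      ext j; exact congrFun h j
    have hker : (M - μ • (1 : Matrix (Fin 3) (Fin 3) ℝ)) *ᵥ ⇑(hHerm.eigenvectorBasis i) = 0 := by
      rw [Matrix.sub_mulVec, hv, Matrix.smul_mulVec, Matrix.one_mulVec]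
      simp [hμ]
    have hdet0 : (M - μ • (1 : Matrix (Fin 3) (Fin 3) ℝ)).det = 0 :=
      Matrix.exists_mulVec_eq_zero_iff.mp ⟨_, hvne, hker⟩
    rw [Matrix.det_fin_three] at hdet0
    simp [hM, Matrix.smul_apply, Matrix.one_apply] at hdet0
    by_contra hneg
    push_neg at hneg
    nlinarith [hdet0, sq_nonneg μ, mul_pos (neg_pos.mpr hneg) (neg_pos.mpr hneg)]
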